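/- Let A and P be real N×N matrices with P symmetric and idempotent (P² = P, Pᵀ = P), and suppose A·P = P, P·A = P, and ‖A − P‖ < 1, where ‖·‖ is the ℓ² operator norm. Then the fixed-point set of A equals the range of P, i.e., {x ∈ ℝ^N : A·x = x} = range(P). In particular, every fixed point of A lies in the subspace onto which P orthogonally projects. -/

import Mathlib

open Matrix

/-- Under the gossip-matrix conditions, the fixed-point set of `A` equals the
range of the orthogonal projection `P`. -/
theorem gossip_fixed_points_eq_range {N : ℕ} (A P : Matrix (Fin N) (Fin N) ℝ)
    (hPsymm : Pᵀ = P) (hPidem : P * P = P)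
    (hAP : A * P = P) (hPA : P * A = P)
    (hnorm : ‖Matrix.toEuclideanCLM (𝕜 := ℝ) (A - P)‖ < 1) :
    {x : Fin N → ℝ | A.mulVec x = x} = Set.range P.mulVec := by
  ext x
  simp only [Set.mem_setOf_eq, Set.mem_range]
  constructor
  · intro hx
    refine ⟨x, ?_⟩
    -- show P x = x; let z = x - P x, then (A - P) z = z, hence z = 0 by norm
    set z : Fin N → ℝ := x - P.mulVec x with hz
    have hfix : (A - P).mulVec z = z := by
      have h1 : A.mulVec (P.mulVec x) = P.mulVec x := by
        rw [Matrix.mulVec_mulVec, hAP]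
      have h2 : P.mulVec (A.mulVec x) = P.mulVec x := by
        rw [Matrix.mulVec_mulVec, hPA]
      have h3 : P.mulVec (P.mulVec x) = P.mulVec x := by
        rw [Matrix.mulVec_mulVec, hPidem]
      simp only [hz, Matrix.sub_mulVec, Matrix.mulVec_sub, hx, h1, h2, h3]
      abel
    have hzero : z = 0 := by
      by_contra hne
      set v : EuclideanSpace ℝ (Fin N) := (WithLp.equiv 2 _).symm z with hv
      have hfv : Matrix.toEuclideanCLM (𝕜 := ℝ) (A - P) v = v := by
        rw [hv, WithLp.equiv_symm_apply, Matrix.toEuclideanCLM_toLp, hfix]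
      have hvne : v ≠ 0 := by
        simpa [hv] using hne
      have hle : ‖v‖ ≤ ‖Matrix.toEuclideanCLM (𝕜 := ℝ) (A - P)‖ * ‖v‖ := by
        conv_lhs => rw [← hfv]
        exact (Matrix.toEuclideanCLM (𝕜 := ℝ) (A - P)).le_opNorm v
      have hvpos : 0 < ‖v‖ := norm_pos_iff.mpr hvne
      nlinarith
    exact (sub_eq_zero.mp hzero).symm
  · rintro ⟨y, rfl⟩
    rw [Matrix.mulVec_mulVec, hAP]
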